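/- Let G be a group that is the union of three proper subgroups G1, G2, G3. Then the square of every element of G lies in the intersection G1 ∩ G2 ∩ G3. -/
import Mathlib

private lemma inner_sq_mem {G : Type*} [Group G] (A B C : Subgroup G)
    (hcov : ∀ g : G, g ∈ A ∨ g ∈ B ∨ g ∈ C)
    {a g : G} (haA : a ∈ A) (haB : a ∉ B) (haC : a ∉ C)
    (hgA : g ∉ A) (hgB : g ∈ B) : g ^ 2 ∈ A := by
  have hgC : g ∉ C := by
    intro hgC
    rcases hcov (a * g) with h | h | h
    · exact hgA (by simpa using A.mul_mem (A.inv_mem haA) h)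
    · exact haB (by simpa using B.mul_mem h (B.inv_mem hgB))
    · exact haC (by simpa using C.mul_mem h (C.inv_mem hgC))
  have hagC : a * g ∈ C := by
    rcases hcov (a * g) with h | h | h
    · exact absurd (by simpa using A.mul_mem (A.inv_mem haA) h) hgA
    · exact absurd (by simpa using B.mul_mem h (B.inv_mem hgB)) haB
    · exact h
  rcases hcov (a * g ^ 2) with h | h | h
  · simpa using A.mul_mem (A.inv_mem haA) h
  · exact absurd (by have := B.mul_mem h (B.inv_mem (B.pow_mem hgB 2)); group at this; exact this) haB
  · have : g ∈ C := by
      have := C.mul_mem (C.inv_mem hagC) h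
      simpa [sq, mul_assoc] using this
    exact absurd this hgC

private lemma key_sq_mem {G : Type*} [Group G] (A B C : Subgroup G)
    (hB : B ≠ ⊤) (hC : C ≠ ⊤)
    (hcov : ∀ g : G, g ∈ A ∨ g ∈ B ∨ g ∈ C) : ∀ g : G, g ^ 2 ∈ A := by
  obtain ⟨x, hx⟩ : ∃ x : G, x ∉ B := by
    by_contra h; push_neg at h; exact hB (Subgroup.eq_top_iff' B |>.2 h)
  obtain ⟨y, hy⟩ : ∃ y : G, y ∉ C := by
    by_contra h; push_neg at h; exact hC (Subgroup.eq_top_iff' C |>.2 h)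
  obtain ⟨a, haB, haC⟩ : ∃ a : G, a ∉ B ∧ a ∉ C := by
    by_cases hxC : x ∈ C
    · by_cases hyB : y ∈ B
      · refine ⟨x * y, fun h => hx ?_, fun h => hy ?_⟩
        · simpa using B.mul_mem h (B.inv_mem hyB)
        · simpa using C.mul_mem (C.inv_mem hxC) h
      · exact ⟨y, hyB, hy⟩
    · exact ⟨x, hx, hxC⟩
  have haA : a ∈ A := by rcases hcov a with h | h | h <;> tauto
  intro g
  by_cases hgA : g ∈ A
  · exact A.pow_mem hgA 2
  rcases hcov g with h | h | h
  · exact absurd h hgA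
  · exact inner_sq_mem A B C hcov haA haB haC hgA h
  · exact inner_sq_mem A C B (fun g => by rcases hcov g with h | h | h <;> tauto)
      haA haC haB hgA h

theorem square_mem_inter_of_union_three_proper_subgroups
    {G : Type*} [Group G] (G1 G2 G3 : Subgroup G)
    (h1 : G1 ≠ ⊤) (h2 : G2 ≠ ⊤) (h3 : G3 ≠ ⊤)
    (hcover : ∀ g : G, g ∈ G1 ∨ g ∈ G2 ∨ g ∈ G3) :
    ∀ g : G, g ^ 2 ∈ G1 ⊓ G2 ⊓ G3 := by
  intro g
  refine ⟨⟨key_sq_mem G1 G2 G3 h2 h3 hcover g, ?_⟩, ?_⟩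
  · exact key_sq_mem G2 G1 G3 h1 h3 (fun g => by rcases hcover g with h | h | h <;> tauto) g
  · exact key_sq_mem G3 G1 G2 h1 h2 (fun g => by rcases hcover g with h | h | h <;> tauto) g
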